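/- Let T be a proper binary tree with saturated vertices u and w such that R_T(u) = R_T(w). Let u_1, w_1 be the respective siblings of u and w, and u_0, w_0 their respective parents, with neither u_0 nor w_0 an ancestor of the other. If R_T(w_1) ≥ R_T(u_1) and T* is the proper binary tree obtained from T by deleting the edges uu_0 and w_1w_0 and adding the edges uw_0 and w_1u_0 (i.e., exchanging the subtrees T(u) and T(w_1)), then R(T*) ≥ R(T). -/

import Mathlib

/-- Proper binary trees: every internal vertex has exactly two children. -/
inductive BTree : Type
  | leaf : BTree
  | node : BTree → BTree → BTree
  deriving DecidableEq

namespace BTree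

/-- The rank (protection number) of the root of a proper binary tree:
the minimum distance from the root to a leaf descendant. -/
def rank : BTree → ℕ
  | leaf => 0
  | node l r => min l.rank r.rank + 1

/-- The security of a proper binary tree: the sum of the ranks of all vertices. -/
def security : BTree → ℕ
  | leaf => 0
  | node l r => (node l r).rank + l.security + r.security

/-- The number of leaves. -/
def leafCount : BTree → ℕ
  | leaf => 1
  | node l r => l.leafCount + r.leafCount

/-- The height: maximum distance from the root to a leaf. -/
def height : BTree → ℕ
  | leaf => 0
  | node l r => max l.height r.height + 1

/-- A tree is complete if all leaves are at the same depth. -/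
def IsComplete : BTree → Prop
  | leaf => True
  | node l r => IsComplete l ∧ IsComplete r ∧ l.height = r.height

/-- The subtree at a given position (a list of directions from the root;
`false` = first child, `true` = second child), if the position exists. -/
def subtreeAt : BTree → List Bool → Option BTree
  | t, [] => some t
  | leaf, _ :: _ => none
  | node l _, false :: p => subtreeAt l p
  | node _ r, true :: p => subtreeAt r p

/-- Replace the subtree at a given position by `s`. -/
def replaceAt : BTree → List Bool → BTree → BTree
  | _, [], s => s
  | leaf, _ :: _, _ => leaf
  | node l r, false :: p, s => node (replaceAt l p s) r
  | node l r, true :: p, s => node l (replaceAt r p s)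

/-- The rank of the vertex at position `p` in `T` (rank of a vertex only depends
on the subtree consisting of the vertex and its descendants). -/
def rankAt (T : BTree) (p : List Bool) : ℕ := ((T.subtreeAt p).map rank).getD 0

/-- The vertex at position `p` in `T` is saturated: its subtree is complete, but the
subtree of none of its (proper) ancestors is complete. -/
def Saturated (T : BTree) (p : List Bool) : Prop :=
  (∃ s, T.subtreeAt p = some s ∧ IsComplete s) ∧
  ∀ q s, q <+: p → q ≠ p → T.subtreeAt q = some s → ¬ IsComplete s

/-- The complete binary tree of height `m` (with `2 ^ m` leaves). -/
def completeTree : ℕ → BTree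
  | 0 => leaf
  | m + 1 => node (completeTree m) (completeTree m)

/-- The tree `T_L` for `L = (n₁, …, n_k)`: a binary caterpillar whose spine vertices carry
complete binary trees with `2 ^ nᵢ` leaves. -/
def TL : List ℕ → BTree
  | [] => leaf
  | n :: ns => ns.foldl (fun acc m => node acc (completeTree m)) (completeTree n)

/-- Helper for the almost complete tree: a complete binary tree of height `m`
whose leftmost `r` leaves each receive two leaf children. -/
def buildF : ℕ → ℕ → BTree
  | 0, r => if r = 0 then leaf else node leaf leaf
  | m + 1, r => node (buildF m (min r (2 ^ m))) (buildF m (r - 2 ^ m))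

/-- The almost complete ("good") tree `F(ℓ)` on `ℓ` leaves. -/
def F (ℓ : ℕ) : BTree := buildF (Nat.log 2 ℓ) (ℓ - 2 ^ Nat.log 2 ℓ)

theorem subtreeAt_append (T : BTree) (p q : List Bool) :
    subtreeAt T (p ++ q) = (subtreeAt T p).bind (fun t => subtreeAt t q) := by
  induction p generalizing T with
  | nil => simp [subtreeAt]
  | cons b p ih =>
    cases T with
    | leaf => simp [subtreeAt]
    | node l r => cases b <;> simp [subtreeAt, ih]

theorem replaceAt_append (T t : BTree) (p q : List Bool) (s : BTree)
    (h : subtreeAt T p = some t) :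
    replaceAt T (p ++ q) s = replaceAt T p (replaceAt t q s) := by
  induction p generalizing T with
  | nil => simp [subtreeAt] at h; subst h; simp [replaceAt]
  | cons b p ih =>
    cases T with
    | leaf => simp [subtreeAt] at h
    | node l r => cases b <;> simp_all [subtreeAt, replaceAt]

theorem subtreeAt_replaceAt_incomp (T s : BTree) (p q : List Bool)
    (h1 : ¬ p <+: q) (h2 : ¬ q <+: p) :
    subtreeAt (replaceAt T p s) q = subtreeAt T q := by
  induction p generalizing T q with
  | nil => exact absurd (List.nil_prefix) h1
  | cons b p ih =>
    cases q with
    | nil => exact absurd List.nil_prefix h2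
    | cons c q =>
      cases T with
      | leaf => simp [replaceAt]
      | node l r =>
        simp only [List.cons_prefix_cons, not_and] at h1 h2
        by_cases hbc : b = c
        · subst hbc
          cases b <;> simp [replaceAt, subtreeAt, ih _ _ (h1 rfl) (h2 rfl)]
        · cases b <;> cases c <;> simp_all [replaceAt, subtreeAt]

theorem subtreeAt_replaceAt (T t s : BTree) (p : List Bool) (h : subtreeAt T p = some t) :
    subtreeAt (replaceAt T p s) p = some s := by
  induction p generalizing T with
  | nil => simp [subtreeAt, replaceAt]
  | cons b p ih =>
    cases T with
    | leaf => simp [subtreeAt] at h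
    | node l r => cases b <;> simp_all [subtreeAt, replaceAt]

theorem replaceAt_replaceAt (T a b : BTree) (p : List Bool) :
    replaceAt (replaceAt T p a) p b = replaceAt T p b := by
  induction p generalizing T with
  | nil => simp [replaceAt]
  | cons c p ih =>
    cases T with
    | leaf => simp [replaceAt]
    | node l r => cases c <;> simp_all [replaceAt]

theorem replaceAt_self (T t : BTree) (p : List Bool) (h : subtreeAt T p = some t) :
    replaceAt T p t = T := by
  induction p generalizing T with
  | nil => simp [subtreeAt] at h; simp [replaceAt, h]
  | cons b p ih =>
    cases T with
    | leaf => simp [subtreeAt] at h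
    | node l r => cases b <;> simp_all [subtreeAt, replaceAt]

theorem rank_replace (T t s : BTree) (p : List Bool) (h : subtreeAt T p = some t)
    (hr : t.rank ≤ s.rank) : T.rank ≤ (replaceAt T p s).rank := by
  induction p generalizing T with
  | nil => simp [subtreeAt] at h; subst h; simpa [replaceAt]
  | cons b p ih =>
    cases T with
    | leaf => simp [subtreeAt] at h
    | node l r =>
      cases b
      · simp only [subtreeAt] at h
        have := ih l h
        simp only [replaceAt, rank]
        omega
      · simp only [subtreeAt] at h
        have := ih r h
        simp only [replaceAt, rank]
        omega

theorem security_replace (T t s : BTree) (p : List Bool) (h : subtreeAt T p = some t)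
    (hr : t.rank ≤ s.rank) :
    T.security + s.security ≤ (replaceAt T p s).security + t.security := by
  induction p generalizing T with
  | nil => simp [subtreeAt] at h; subst h; simp [replaceAt]; omega
  | cons b p ih =>
    cases T with
    | leaf => simp [subtreeAt] at h
    | node l r =>
      cases b
      · simp only [subtreeAt] at h
        have h1 := ih l h
        have h2 := rank_replace l t s p h hr
        simp only [replaceAt, security, rank]
        omega
      · simp only [subtreeAt] at h
        have h1 := ih r h
        have h2 := rank_replace r t s p h hr
        simp only [replaceAt, security, rank]
        omega

theorem core (T t1 t2 s1 s2 : BTree) (p1 p2 : List Bool)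
    (h1 : subtreeAt T p1 = some t1) (h2 : subtreeAt T p2 = some t2)
    (hi1 : ¬ p1 <+: p2) (hi2 : ¬ p2 <+: p1)
    (hr1 : t1.rank ≤ s1.rank) (hr2 : t2.rank ≤ s2.rank)
    (hsec : t1.security + t2.security ≤ s1.security + s2.security) :
    T.security ≤ ((T.replaceAt p1 s1).replaceAt p2 s2).security := by
  have A := security_replace T t1 s1 p1 h1 hr1
  have h2' : subtreeAt (T.replaceAt p1 s1) p2 = some t2 := by
    rw [subtreeAt_replaceAt_incomp _ _ _ _ hi1 hi2]; exact h2
  have B := security_replace _ t2 s2 p2 h2' hr2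
  omega

theorem subtree_node (T x y : BTree) (p : List Bool) (d : Bool)
    (hx : subtreeAt T (p ++ [d]) = some x) (hy : subtreeAt T (p ++ [!d]) = some y) :
    subtreeAt T p = some (if d then node y x else node x y) := by
  rw [subtreeAt_append] at hx hy
  cases h0 : subtreeAt T p with
  | none => rw [h0] at hx; simp at hx
  | some t =>
    rw [h0] at hx hy
    cases t with
    | leaf => cases d <;> simp [subtreeAt] at hx
    | node l r => cases d <;> simp_all [subtreeAt]

end BTree

open BTree in
/-- Switching lemma (Lemma sw1): for saturated vertices `u` (at position `pu0 ++ [du]`,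
with parent `u₀` at `pu0` and sibling `u₁`) and `w` (at position `pw0 ++ [dw]`, with parent
`w₀` at `pw0` and sibling `w₁`) of equal rank, with neither parent an ancestor of the other,
if `R_T(w₁) ≥ R_T(u₁)` then exchanging the subtrees `T(u)` and `T(w₁)` does not decrease
the security. -/
theorem switching_lemma_one (T tu tw tu1 tw1 : BTree) (pu0 pw0 : List Bool) (du dw : Bool)
    (hu : T.subtreeAt (pu0 ++ [du]) = some tu)
    (hw : T.subtreeAt (pw0 ++ [dw]) = some tw)
    (hu1 : T.subtreeAt (pu0 ++ [!du]) = some tu1)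
    (hw1 : T.subtreeAt (pw0 ++ [!dw]) = some tw1)
    (hsatu : Saturated T (pu0 ++ [du]))
    (hsatw : Saturated T (pw0 ++ [dw]))
    (hrank : tu.rank = tw.rank)
    (hanc1 : ¬ (pu0 <+: pw0 ∧ pu0 ≠ pw0)) (hanc2 : ¬ (pw0 <+: pu0 ∧ pw0 ≠ pu0))
    (hsib : tu1.rank ≤ tw1.rank) :
    T.security ≤ ((T.replaceAt (pu0 ++ [du]) tw1).replaceAt (pw0 ++ [!dw]) tu).security := by
  by_cases hp : pu0 = pw0
  · subst hp
    by_cases hd : du = dw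
    · subst hd
      have htw1 : tw1 = tu1 := by
        have := hu1.symm.trans hw1; exact (Option.some.inj this).symm
      rw [htw1]
      have h0 := subtree_node T tu tu1 pu0 du hu hu1
      cases du with
      | false =>
        simp only [Bool.not_false, Bool.false_eq_true, if_false] at h0 ⊢
        rw [replaceAt_append T _ pu0 _ tu1 h0,
            replaceAt_append _ _ pu0 _ tu (subtreeAt_replaceAt T _ _ pu0 h0),
            replaceAt_replaceAt]
        simp only [replaceAt]
        have key := security_replace T (node tu tu1) (node tu1 tu) pu0 h0
          (by simp only [rank]; omega)
        simp only [security, rank] at key ⊢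
        omega
      | true =>
        simp only [Bool.not_true, if_true] at h0 ⊢
        rw [replaceAt_append T _ pu0 _ tu1 h0,
            replaceAt_append _ _ pu0 _ tu (subtreeAt_replaceAt T _ _ pu0 h0),
            replaceAt_replaceAt]
        simp only [replaceAt]
        have key := security_replace T (node tu1 tu) (node tu tu1) pu0 h0
          (by simp only [rank]; omega)
        simp only [security, rank] at key ⊢
        omega
    · have hdw : dw = !du := by cases du <;> cases dw <;> simp_all
      subst hdw
      rw [Bool.not_not] at hw1
      have htw1 : tw1 = tu := by
        have := hu.symm.trans hw1; exact (Option.some.inj this).symm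
      rw [htw1]
      simp only [Bool.not_not]
      rw [replaceAt_replaceAt, replaceAt_self T tu _ hu]
  · have hi1 : ¬ pu0 <+: pw0 := fun h => hanc1 ⟨h, hp⟩
    have hi2 : ¬ pw0 <+: pu0 := fun h => hanc2 ⟨h, Ne.symm hp⟩
    have h0u := subtree_node T tu tu1 pu0 du hu hu1
    have h0w := subtree_node T tw tw1 pw0 dw hw hw1
    rw [replaceAt_append T _ pu0 [du] tw1 h0u,
        replaceAt_append _ _ pw0 [!dw] tu
          (by rw [subtreeAt_replaceAt_incomp _ _ _ _ hi1 hi2]; exact h0w)]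
    refine core T _ _ _ _ pu0 pw0 h0u h0w hi1 hi2 ?_ ?_ ?_ <;>
      cases du <;> cases dw <;> simp only [rank, security, replaceAt, if_true, if_false,
        Bool.not_false, Bool.false_eq_true, Bool.not_true] <;> omega
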